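/- Let G be a finite graph and I an independent set of G. Then |II(G)| = 2^|I| · Σ_𝒮 Π_{S ∈ 𝒮} 2^(−|N_G(S, I)|), where the sum ranges over all collections 𝒮 of pairwise compatible polymers of the polymer model P(G, I) (including the empty collection, which contributes the empty product 1). -/

import Mathlib

/-- The discrete torus `Z_m^n`: the graph on `(ZMod m)^n` where two vertices are adjacent
iff they differ by `±1 (mod m)` in exactly one coordinate. -/
def torus (m n : ℕ) : SimpleGraph (Fin n → ZMod m) :=
  SimpleGraph.fromRel fun u v =>
    ∃ j : Fin n, (u j = v j + 1 ∨ u j = v j - 1) ∧ ∀ i : Fin n, i ≠ j → u i = v i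

/-- A set of vertices is independent if its vertices are pairwise non-adjacent. -/
def IsIndep {V : Type*} (G : SimpleGraph V) (s : Set V) : Prop :=
  s.Pairwise fun u v => ¬ G.Adj u v

/-- `N_G(X) := (⋃ x ∈ X, N_G(x)) \ X`. -/
def nbhd {V : Type*} (G : SimpleGraph V) (X : Set V) : Set V :=
  (⋃ x ∈ X, G.neighborSet x) \ X

/-- `N_G(X, Y) := N_G(X) ∩ Y`. -/
def nbhdIn {V : Type*} (G : SimpleGraph V) (X Y : Set V) : Set V :=
  nbhd G X ∩ Y

/-- `E_m^n(p)`: the vertices of `Z_m^n` whose coordinate sum is `p` modulo `m`. -/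
def Eclass (m n : ℕ) (p : ZMod m) : Set (Fin n → ZMod m) :=
  {v | ∑ i, v i = p}

/-- A maximum independent set: an independent set of the largest possible cardinality. -/
def MaxIndep {V : Type*} (G : SimpleGraph V) (s : Set V) : Prop :=
  IsIndep G s ∧ ∀ t : Set V, IsIndep G t → t.ncard ≤ s.ncard

/-- `S` is `(2, I)`-linked if the induced subgraph `G[S ∪ N_G(S, I)]` is connected. -/
def Linked2 {V : Type*} (G : SimpleGraph V) (I : Set V) (S : Set V) : Prop :=
  (G.induce (S ∪ nbhdIn G S I)).Connected

/-- A polymer of the polymer model `P(G, I)`: a nonempty `(2, I)`-linked subset of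
`V(G) \ I` that is independent in `G`. -/
def Polymer {V : Type*} (G : SimpleGraph V) (I : Set V) (S : Set V) : Prop :=
  S.Nonempty ∧ S ⊆ Iᶜ ∧ IsIndep G S ∧ Linked2 G I S

/-- Two (distinct) polymers `S, T` are compatible if `S ∪ T` is independent in `G` but
not `(2, I)`-linked. -/
def Compatible {V : Type*} (G : SimpleGraph V) (I : Set V) (S T : Set V) : Prop :=
  IsIndep G (S ∪ T) ∧ ¬ Linked2 G I (S ∪ T)

namespace StmtAux

open Set

variable {V : Type*} {G : SimpleGraph V} {I : Set V}

/-- Adjacency restricted to a vertex set `W`. -/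
def Rel (G : SimpleGraph V) (W : Set V) (a b : V) : Prop := a ∈ W ∧ b ∈ W ∧ G.Adj a b

/-- Reachability within the vertex set `W`. -/
def RW (G : SimpleGraph V) (W : Set V) : V → V → Prop := Relation.ReflTransGen (Rel G W)

lemma Rel.symm {W : Set V} {a b : V} (h : Rel G W a b) : Rel G W b a :=
  ⟨h.2.1, h.1, h.2.2.symm⟩

lemma RW.symm {W : Set V} {a b : V} (h : RW G W a b) : RW G W b a :=
  (@Relation.ReflTransGen.stdSymm _ _ ⟨fun _ _ h => Rel.symm h⟩).symm _ _ h

lemma RW.trans {W : Set V} {a b c : V} (h : RW G W a b) (h' : RW G W b c) : RW G W a c :=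
  Relation.ReflTransGen.trans h h'

lemma RW.mono {W W' : Set V} (hWW : W ⊆ W') {a b : V} (h : RW G W a b) : RW G W' a b :=
  Relation.ReflTransGen.mono (p := Rel G W') (fun x y hxy => ⟨hWW hxy.1, hWW hxy.2.1, hxy.2.2⟩) a b h

lemma walk_to_rw {W : Set V} {a b : ↥W} (p : (G.induce W).Walk a b) : RW G W ↑a ↑b := by
  induction p with
  | nil => exact Relation.ReflTransGen.refl
  | cons h _ ih =>
    exact Relation.ReflTransGen.head ⟨Subtype.coe_prop _, Subtype.coe_prop _, h⟩ ih

lemma rw_to_reachable {W : Set V} {a b : V} (h : RW G W a b) (ha : a ∈ W) :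
    ∃ hb : b ∈ W, (G.induce W).Reachable ⟨a, ha⟩ ⟨b, hb⟩ := by
  induction h with
  | refl => exact ⟨ha, SimpleGraph.Reachable.refl _⟩
  | @tail c b h1 h2 ih =>
    obtain ⟨hc, hr⟩ := ih
    exact ⟨h2.2.1, hr.trans (SimpleGraph.Adj.reachable (by exact h2.2.2))⟩

lemma induce_connected_iff {W : Set V} :
    (G.induce W).Connected ↔ W.Nonempty ∧ ∀ a ∈ W, ∀ b ∈ W, RW G W a b := by
  constructor
  · intro h
    obtain ⟨w⟩ := h.nonempty
    refine ⟨⟨w, w.2⟩, fun a ha b hb => ?_⟩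
    obtain ⟨p⟩ := h.preconnected ⟨a, ha⟩ ⟨b, hb⟩
    exact walk_to_rw p
  · rintro ⟨⟨w, hw⟩, hr⟩
    haveI : Nonempty ↥W := ⟨⟨w, hw⟩⟩
    apply SimpleGraph.Connected.mk
    intro a b
    obtain ⟨hb, hreach⟩ := rw_to_reachable (hr a a.2 b b.2) a.2
    exact hreach

lemma linked2_iff {S : Set V} :
    Linked2 G I S ↔ (S ∪ nbhdIn G S I).Nonempty ∧
      ∀ a ∈ S ∪ nbhdIn G S I, ∀ b ∈ S ∪ nbhdIn G S I, RW G (S ∪ nbhdIn G S I) a b :=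
  induce_connected_iff

lemma mem_nbhdIn {X : Set V} {u : V} :
    u ∈ nbhdIn G X I ↔ u ∈ I ∧ u ∉ X ∧ ∃ x ∈ X, G.Adj x u := by
  simp only [nbhdIn, nbhd, Set.mem_inter_iff, Set.mem_diff, Set.mem_iUnion,
    SimpleGraph.mem_neighborSet]
  tauto

lemma indep_not_adj {s : Set V} (h : IsIndep G s) {a b : V} (ha : a ∈ s) (hb : b ∈ s) :
    ¬ G.Adj a b := fun hadj => h ha hb (G.ne_of_adj hadj) hadj

lemma indep_mono {s t : Set V} (h : s ⊆ t) (ht : IsIndep G t) : IsIndep G s :=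
  Set.Pairwise.mono h ht

/-- The `(2,I)`-linked component ("piece") of `x` inside `D`. -/
def pieceD (G : SimpleGraph V) (I D : Set V) (x : V) : Set V :=
  {y ∈ D | RW G (D ∪ nbhdIn G D I) x y}

/-- The collection of `(2,I)`-linked components of `J \ I`. -/
def compsOf (G : SimpleGraph V) (I J : Set V) : Set (Set V) :=
  {S | ∃ x ∈ J \ I, S = pieceD G I (J \ I) x}

lemma pieceD_subset {D : Set V} {x : V} : pieceD G I D x ⊆ D := fun _ hy => hy.1

lemma mem_pieceD_self {D : Set V} {x : V} (hx : x ∈ D) : x ∈ pieceD G I D x :=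
  ⟨hx, Relation.ReflTransGen.refl⟩

lemma nbhdIn_subset_nbhdIn {X D : Set V} (hXD : X ⊆ D) (hD : D ⊆ Iᶜ) :
    nbhdIn G X I ⊆ nbhdIn G D I := by
  intro u hu
  rw [mem_nbhdIn] at hu ⊢
  obtain ⟨huI, _, x, hxX, hadj⟩ := hu
  exact ⟨huI, fun huD => hD huD huI, x, hXD hxX, hadj⟩

lemma piece_closure (hI : IsIndep G I) {D : Set V} (hD : D ⊆ Iᶜ) {x : V} (hx : x ∈ D) :
    pieceD G I D x ∪ nbhdIn G (pieceD G I D x) I =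
      {z ∈ D ∪ nbhdIn G D I | RW G (D ∪ nbhdIn G D I) x z} := by
  set W := D ∪ nbhdIn G D I with hW
  ext z
  constructor
  · rintro (⟨hzD, hzR⟩ | hz)
    · exact ⟨Or.inl hzD, hzR⟩
    · rw [mem_nbhdIn] at hz
      obtain ⟨hzI, hzS, s, hsS, hadj⟩ := hz
      have hsD : s ∈ D := hsS.1
      have hzW : z ∈ W := Or.inr (mem_nbhdIn.mpr
        ⟨hzI, fun hzD => hD hzD hzI, s, hsD, hadj⟩)
      exact ⟨hzW, hsS.2.tail ⟨Or.inl hsD, hzW, hadj⟩⟩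
  · rintro ⟨hzW, hzR⟩
    rcases hzW with hzD | hzN
    · exact Or.inl ⟨hzD, hzR⟩
    · have hzI : z ∈ I := (mem_nbhdIn.mp hzN).1
      rcases Relation.ReflTransGen.cases_tail hzR with heq | ⟨c, hxc, hcz⟩
      · exact absurd hzI (heq ▸ hD hx)
      · rcases hcz.1 with hcD | hcN
        · refine Or.inr (mem_nbhdIn.mpr ⟨hzI, ?_, c, ⟨hcD, hxc⟩, hcz.2.2⟩)
          intro hzS
          exact hD (pieceD_subset hzS) hzI
        · exact absurd hcz.2.2 (indep_not_adj hI (mem_nbhdIn.mp hcN).1 hzI)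

lemma rw_to_component {W : Set V} {x b : V} (h : RW G W x b) :
    RW G {z ∈ W | RW G W x z} x b := by
  induction h with
  | refl => exact Relation.ReflTransGen.refl
  | @tail c b h1 h2 ih =>
    exact ih.tail ⟨⟨h2.1, h1⟩, ⟨h2.2.1, h1.tail h2⟩, h2.2.2⟩

lemma piece_linked2 (hI : IsIndep G I) {D : Set V} (hD : D ⊆ Iᶜ) {x : V} (hx : x ∈ D) :
    Linked2 G I (pieceD G I D x) := by
  rw [Linked2, induce_connected_iff, piece_closure hI hD hx]
  set W := D ∪ nbhdIn G D I with hW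
  refine ⟨⟨x, Or.inl hx, Relation.ReflTransGen.refl⟩, ?_⟩
  rintro a ⟨haW, haR⟩ b ⟨hbW, hbR⟩
  exact (rw_to_component haR).symm.trans (rw_to_component hbR)

lemma piece_eq_of_rw {D : Set V} {x y : V} (hx : x ∈ D) (hy : y ∈ D)
    (h : RW G (D ∪ nbhdIn G D I) x y) : pieceD G I D x = pieceD G I D y := by
  ext z
  exact ⟨fun hz => ⟨hz.1, (RW.symm h).trans hz.2⟩, fun hz => ⟨hz.1, h.trans hz.2⟩⟩

lemma piece_polymer (hI : IsIndep G I) {D : Set V} (hD : D ⊆ Iᶜ) (hind : IsIndep G D)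
    {x : V} (hx : x ∈ D) : Polymer G I (pieceD G I D x) :=
  ⟨⟨x, mem_pieceD_self hx⟩, fun y hy => hD (pieceD_subset hy),
    indep_mono pieceD_subset hind, piece_linked2 hI hD hx⟩

lemma piece_compatible (hI : IsIndep G I) {D : Set V} (hD : D ⊆ Iᶜ) (hind : IsIndep G D)
    {x y : V} (hx : x ∈ D) (hy : y ∈ D)
    (hne : pieceD G I D x ≠ pieceD G I D y) :
    Compatible G I (pieceD G I D x) (pieceD G I D y) := by
  set S := pieceD G I D x
  set T := pieceD G I D y
  refine ⟨indep_mono (Set.union_subset pieceD_subset pieceD_subset) hind, fun hlink => ?_⟩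
  rw [linked2_iff] at hlink
  have hU : (S ∪ T) ∪ nbhdIn G (S ∪ T) I ⊆ D ∪ nbhdIn G D I :=
    Set.union_subset
      ((Set.union_subset pieceD_subset pieceD_subset).trans Set.subset_union_left)
      ((nbhdIn_subset_nbhdIn (Set.union_subset pieceD_subset pieceD_subset) hD).trans
        Set.subset_union_right)
  have hxy : RW G (D ∪ nbhdIn G D I) x y := by
    refine RW.mono hU (hlink.2 x ?_ y ?_)
    · exact Or.inl (Or.inl (mem_pieceD_self hx))
    · exact Or.inl (Or.inr (mem_pieceD_self hy))
  exact hne (piece_eq_of_rw hx hy hxy)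

lemma sUnion_compsOf {J : Set V} : ⋃₀ compsOf G I J = J \ I := by
  apply Set.Subset.antisymm
  · rintro z ⟨S, ⟨x, hx, rfl⟩, hz⟩
    exact pieceD_subset hz
  · intro z hz
    exact ⟨pieceD G I (J \ I) z, ⟨z, hz, rfl⟩, mem_pieceD_self hz⟩

lemma nbhdIn_sUnion {𝒮 : Set (Set V)} (h : ∀ S ∈ 𝒮, S ⊆ Iᶜ) :
    nbhdIn G (⋃₀ 𝒮) I = ⋃ S ∈ 𝒮, nbhdIn G S I := by
  ext u
  simp only [mem_nbhdIn, Set.mem_iUnion, Set.mem_sUnion]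
  constructor
  · rintro ⟨huI, _, x, ⟨S, hS, hxS⟩, hadj⟩
    exact ⟨S, hS, huI, fun huS => h S hS huS huI, x, hxS, hadj⟩
  · rintro ⟨S, hS, huI, _, x, hxS, hadj⟩
    exact ⟨huI, fun ⟨T, hT, huT⟩ => h T hT huT huI, x, ⟨S, hS, hxS⟩, hadj⟩

lemma nbhdIn_union {S T : Set V} (hS : S ⊆ Iᶜ) (hT : T ⊆ Iᶜ) :
    nbhdIn G (S ∪ T) I = nbhdIn G S I ∪ nbhdIn G T I := by
  ext u
  simp only [mem_nbhdIn, Set.mem_union]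
  constructor
  · rintro ⟨huI, hu, x, hx | hx, hadj⟩
    · exact Or.inl ⟨huI, fun huS => hS huS huI, x, hx, hadj⟩
    · exact Or.inr ⟨huI, fun huT => hT huT huI, x, hx, hadj⟩
  · rintro (⟨huI, _, x, hx, hadj⟩ | ⟨huI, _, x, hx, hadj⟩)
    · exact ⟨huI, fun h => (by rcases h with h | h; exacts [hS h huI, hT h huI]),
        x, Or.inl hx, hadj⟩
    · exact ⟨huI, fun h => (by rcases h with h | h; exacts [hS h huI, hT h huI]),
        x, Or.inr hx, hadj⟩

/-- The closures of two compatible polymers are disjoint. -/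
lemma compatible_closure_disjoint {S T : Set V} (hS : Polymer G I S) (hT : Polymer G I T)
    (hc : Compatible G I S T) :
    (S ∪ nbhdIn G S I) ∩ (T ∪ nbhdIn G T I) = ∅ := by
  by_contra h
  obtain ⟨v, hvS, hvT⟩ := Set.nonempty_iff_ne_empty.mpr h
  apply hc.2
  rw [linked2_iff]
  have hUeq : (S ∪ T) ∪ nbhdIn G (S ∪ T) I =
      (S ∪ nbhdIn G S I) ∪ (T ∪ nbhdIn G T I) := by
    rw [nbhdIn_union hS.2.1 hT.2.1]
    ext z; simp only [Set.mem_union]; tauto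
  rw [hUeq]
  set U := (S ∪ nbhdIn G S I) ∪ (T ∪ nbhdIn G T I) with hU
  have hSr := linked2_iff.mp hS.2.2.2
  have hTr := linked2_iff.mp hT.2.2.2
  have key : ∀ a ∈ U, RW G U a v := by
    rintro a (ha | ha)
    · exact RW.mono Set.subset_union_left (hSr.2 a ha v hvS)
    · exact RW.mono Set.subset_union_right (hTr.2 a ha v hvT)
  exact ⟨⟨v, Or.inl hvS⟩, fun a ha b hb => (key a ha).trans (key b hb).symm⟩

section Reconstruct

variable (hI : IsIndep G I) {𝒮 : Set (Set V)}
  (h𝒮 : ∀ S ∈ 𝒮, Polymer G I S) (hp : 𝒮.Pairwise (Compatible G I))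

include hI h𝒮 hp

lemma piece_of_sUnion {S : Set V} (hS : S ∈ 𝒮) {x : V} (hx : x ∈ S) :
    pieceD G I (⋃₀ 𝒮) x = S := by
  have hDc : (⋃₀ 𝒮) ⊆ Iᶜ := fun z ⟨T, hT, hzT⟩ => (h𝒮 T hT).2.1 hzT
  set D := ⋃₀ 𝒮 with hD
  set W := D ∪ nbhdIn G D I with hW
  apply Set.Subset.antisymm
  · -- pieceD ⊆ S : invariance
    have inv : ∀ z, RW G W x z → z ∈ S ∪ nbhdIn G S I := by
      intro z hz
      induction hz with
      | refl => exact Or.inl hx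
      | @tail c z h1 h2 ih =>
        rcases ih with hcS | hcN
        · rcases h2.2.1 with hzD | hzN
          · obtain ⟨T, hT, hzT⟩ := hzD
            by_cases hTS : T = S
            · exact Or.inl (hTS ▸ hzT)
            · exfalso
              exact indep_not_adj (hp hS hT (Ne.symm hTS)).1 (Or.inl hcS) (Or.inr hzT) h2.2.2
          · have hzI : z ∈ I := (mem_nbhdIn.mp hzN).1
            exact Or.inr (mem_nbhdIn.mpr
              ⟨hzI, fun hzS => (h𝒮 S hS).2.1 hzS hzI, c, hcS, h2.2.2⟩)
        · have hcI : c ∈ I := (mem_nbhdIn.mp hcN).1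
          rcases h2.2.1 with hzD | hzN
          · obtain ⟨T, hT, hzT⟩ := hzD
            by_cases hTS : T = S
            · exact Or.inl (hTS ▸ hzT)
            · exfalso
              have hcT : c ∈ nbhdIn G T I := mem_nbhdIn.mpr
                ⟨hcI, fun hcT => (h𝒮 T hT).2.1 hcT hcI, z, hzT, h2.2.2.symm⟩
              have := compatible_closure_disjoint (h𝒮 S hS) (h𝒮 T hT)
                (hp hS hT (Ne.symm hTS))
              have hmem : c ∈ (S ∪ nbhdIn G S I) ∩ (T ∪ nbhdIn G T I) :=
                ⟨Or.inr hcN, Or.inr hcT⟩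
              rw [this] at hmem
              exact hmem
          · exact absurd h2.2.2 (indep_not_adj hI hcI (mem_nbhdIn.mp hzN).1)
    intro z hz
    rcases inv z hz.2 with h | h
    · exact h
    · exact absurd ((mem_nbhdIn.mp h).1) (hDc hz.1)
  · -- S ⊆ pieceD
    intro y hy
    have hCl : S ∪ nbhdIn G S I ⊆ W := Set.union_subset
      ((Set.subset_sUnion_of_mem hS).trans Set.subset_union_left)
      ((nbhdIn_subset_nbhdIn (Set.subset_sUnion_of_mem hS) hDc).trans Set.subset_union_right)
    have hr := (linked2_iff.mp (h𝒮 S hS).2.2.2).2 x (Or.inl hx) y (Or.inl hy)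
    exact ⟨⟨S, hS, hy⟩, RW.mono hCl hr⟩

lemma compsOf_reconstruct {A : Set V} (hA : A ⊆ I) :
    compsOf G I (⋃₀ 𝒮 ∪ A) = 𝒮 := by
  have hDc : (⋃₀ 𝒮) ⊆ Iᶜ := fun z ⟨T, hT, hzT⟩ => (h𝒮 T hT).2.1 hzT
  have hJI : (⋃₀ 𝒮 ∪ A) \ I = ⋃₀ 𝒮 := by
    apply Set.Subset.antisymm
    · rintro z ⟨hz | hz, hzI⟩
      · exact hz
      · exact absurd (hA hz) hzI
    · intro z hz
      exact ⟨Or.inl hz, hDc hz⟩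
  ext S
  constructor
  · rintro ⟨x, hx, rfl⟩
    rw [hJI] at hx ⊢
    obtain ⟨T, hT, hxT⟩ := hx
    rw [piece_of_sUnion hI h𝒮 hp hT hxT]
    exact hT
  · intro hS
    obtain ⟨x, hx⟩ := (h𝒮 S hS).1
    simp only [compsOf, Set.mem_setOf_eq, hJI]
    exact ⟨x, ⟨S, hS, hx⟩, (piece_of_sUnion hI h𝒮 hp hS hx).symm⟩

end Reconstruct

lemma compsOf_mem (hI : IsIndep G I) {J : Set V} (hJ : IsIndep G J) :
    (∀ S ∈ compsOf G I J, Polymer G I S) ∧ (compsOf G I J).Pairwise (Compatible G I) := by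
  have hD : J \ I ⊆ Iᶜ := fun z hz => hz.2
  have hind : IsIndep G (J \ I) := indep_mono Set.diff_subset hJ
  constructor
  · rintro S ⟨x, hx, rfl⟩
    exact piece_polymer hI hD hind hx
  · rintro S ⟨x, hx, rfl⟩ T ⟨y, hy, rfl⟩ hne
    exact piece_compatible hI hD hind hx hy hne

/-- The fiber of the component map over `𝒮`. -/
lemma fiber_eq (hI : IsIndep G I) {𝒮 : Set (Set V)}
    (h𝒮 : ∀ S ∈ 𝒮, Polymer G I S) (hp : 𝒮.Pairwise (Compatible G I)) :
    {J | IsIndep G J ∧ compsOf G I J = 𝒮} =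
      (fun A => ⋃₀ 𝒮 ∪ A) '' {A | A ⊆ I \ nbhdIn G (⋃₀ 𝒮) I} := by
  have hDc : (⋃₀ 𝒮) ⊆ Iᶜ := fun z ⟨T, hT, hzT⟩ => (h𝒮 T hT).2.1 hzT
  ext J
  constructor
  · rintro ⟨hJ, hcomp⟩
    have hJI : J \ I = ⋃₀ 𝒮 := by rw [← hcomp, sUnion_compsOf]
    refine ⟨J ∩ I, ?_, ?_⟩
    · intro a ⟨haJ, haI⟩
      refine ⟨haI, fun haN => ?_⟩
      obtain ⟨_, _, x, hxD, hadj⟩ := mem_nbhdIn.mp haN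
      rw [hJI.symm] at hxD
      exact indep_not_adj hJ hxD.1 haJ hadj
    · rw [← hJI]
      ext z
      simp only [Set.mem_union, Set.mem_diff, Set.mem_inter_iff]
      tauto
  · rintro ⟨A, hA, rfl⟩
    have hAI : A ⊆ I := fun a ha => (hA ha).1
    have hindep : IsIndep G (⋃₀ 𝒮 ∪ A) := by
      rintro u (hu | hu) v (hv | hv) hne hadj
      · obtain ⟨S, hS, huS⟩ := hu
        obtain ⟨T, hT, hvT⟩ := hv
        by_cases hST : S = T
        · subst hST
          exact (h𝒮 S hS).2.2.1 huS hvT hne hadj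
        · exact indep_not_adj (hp hS hT hST).1 (Or.inl huS) (Or.inr hvT) hadj
      · obtain ⟨S, hS, huS⟩ := hu
        exact (hA hv).2 (mem_nbhdIn.mpr
          ⟨(hA hv).1, fun hvD => hDc hvD (hA hv).1, u, ⟨S, hS, huS⟩, hadj⟩)
      · obtain ⟨T, hT, hvT⟩ := hv
        exact (hA hu).2 (mem_nbhdIn.mpr
          ⟨(hA hu).1, fun huD => hDc huD (hA hu).1, v, ⟨T, hT, hvT⟩, hadj.symm⟩)
      · exact indep_not_adj hI (hAI hu) (hAI hv) hadj
    exact ⟨hindep, compsOf_reconstruct hI h𝒮 hp hAI⟩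

/-- Cardinality of the set of subsets of a finite set. -/
lemma ncard_powerset [Finite V] (B : Set V) : {A : Set V | A ⊆ B}.ncard = 2 ^ B.ncard := by
  classical
  have hB : B.Finite := Set.toFinite B
  have himg : {A : Set V | A ⊆ B} =
      ((↑) : Finset V → Set V) '' ↑hB.toFinset.powerset := by
    ext A
    constructor
    · intro hAB
      have hA : A.Finite := hB.subset hAB
      refine ⟨hA.toFinset, Finset.mem_coe.mpr (Finset.mem_powerset.mpr fun x hx => ?_),
        by simp⟩
      exact hB.mem_toFinset.mpr (hAB (hA.mem_toFinset.mp hx))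
    · rintro ⟨F, hF, rfl⟩
      intro x hx
      exact hB.mem_toFinset.mp (Finset.mem_powerset.mp (Finset.mem_coe.mp hF) hx)
  rw [himg, Set.ncard_image_of_injective _ Finset.coe_injective, Set.ncard_coe_finset,
    Finset.card_powerset, Set.ncard_eq_toFinset_card B hB]

end StmtAux

/-- `|II(G)| = 2^|I| · Σ_𝒮 Π_{S ∈ 𝒮} 2^(−|N_G(S, I)|)`, where the sum ranges over all
collections `𝒮` of pairwise compatible polymers of `P(G, I)`. -/
theorem stmt_14 {V : Type*} [Fintype V] (G : SimpleGraph V) (I : Set V)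
    (hI : IsIndep G I) :
    (Nat.card {s : Set V // IsIndep G s} : ℝ) =
      2 ^ I.ncard *
        ∑ᶠ 𝒮 ∈ {𝒮 : Set (Set V) | (∀ S ∈ 𝒮, Polymer G I S) ∧ 𝒮.Pairwise (Compatible G I)},
          ∏ᶠ S ∈ 𝒮, ((2 : ℝ) ^ (nbhdIn G S I).ncard)⁻¹ := by
  classical
  open StmtAux in
  set 𝓚 : Set (Set (Set V)) :=
    {𝒮 : Set (Set V) | (∀ S ∈ 𝒮, Polymer G I S) ∧ 𝒮.Pairwise (Compatible G I)} with h𝓚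
  have hKfin : 𝓚.Finite := Set.toFinite _
  have hIfin : {s : Set V | IsIndep G s}.Finite := Set.toFinite _
  set KF := hKfin.toFinset with hKF
  set IF := hIfin.toFinset with hIF
  -- Step 1 : LHS as a Finset card
  have step1 : Nat.card {s : Set V // IsIndep G s} = IF.card := by
    have h1 : Nat.card {s : Set V // IsIndep G s} = Set.ncard {s : Set V | IsIndep G s} :=
      Nat.card_coe_set_eq {s : Set V | IsIndep G s}
    rw [h1, Set.ncard_eq_toFinset_card _ hIfin]
  -- Step 2 : fiberwise count
  have hmap : ∀ J ∈ IF, compsOf G I J ∈ KF := by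
    intro J hJ
    rw [hIF, Set.Finite.mem_toFinset] at hJ
    rw [hKF, Set.Finite.mem_toFinset]
    exact compsOf_mem hI hJ
  have step2 : IF.card = ∑ 𝒮 ∈ KF, (IF.filter fun J => compsOf G I J = 𝒮).card :=
    Finset.card_eq_sum_card_fiberwise hmap
  -- Step 3 : each fiber has cardinality 2 ^ |I \ N(∪𝒮, I)|
  have step3 : ∀ 𝒮 ∈ KF, (IF.filter fun J => compsOf G I J = 𝒮).card
      = 2 ^ (I \ nbhdIn G (⋃₀ 𝒮) I).ncard := by
    intro 𝒮 hSK
    rw [hKF, Set.Finite.mem_toFinset] at hSK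
    obtain ⟨h𝒮, hp⟩ := hSK
    have hDc : (⋃₀ 𝒮) ⊆ Iᶜ := fun z hz => by
      obtain ⟨T, hT, hzT⟩ := hz
      exact (h𝒮 T hT).2.1 hzT
    have hfib : ↑(IF.filter fun J => compsOf G I J = 𝒮)
        = {J | IsIndep G J ∧ compsOf G I J = 𝒮} := by
      ext J
      simp [hIF, Set.Finite.mem_toFinset]
    have hinj : Set.InjOn (fun A => ⋃₀ 𝒮 ∪ A) {A | A ⊆ I \ nbhdIn G (⋃₀ 𝒮) I} := by
      intro A hA A' hA' h
      have key : ∀ B : Set V, B ⊆ I \ nbhdIn G (⋃₀ 𝒮) I → (⋃₀ 𝒮 ∪ B) ∩ I = B := by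
        intro B hB
        ext a
        constructor
        · rintro ⟨hD | haB, haI⟩
          · exact absurd haI (hDc hD)
          · exact haB
        · exact fun haB => ⟨Or.inr haB, (hB haB).1⟩
      have h' : ⋃₀ 𝒮 ∪ A = ⋃₀ 𝒮 ∪ A' := h
      rw [← key A hA, ← key A' hA', h']
    have h1 : (IF.filter fun J => compsOf G I J = 𝒮).card
        = {J | IsIndep G J ∧ compsOf G I J = 𝒮}.ncard := by
      rw [← hfib, Set.ncard_coe_finset]
    rw [h1, fiber_eq hI h𝒮 hp, Set.ncard_image_of_injOn hinj, ncard_powerset]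
  -- Step 4 : evaluate the inner finprod and convert the finsum to a finset sum
  have hNI : ∀ 𝒮 : Set (Set V), nbhdIn G (⋃₀ 𝒮) I ⊆ I := fun 𝒮 => Set.inter_subset_right
  have step4 : ∀ 𝒮 ∈ KF, (∏ᶠ S ∈ 𝒮, ((2 : ℝ) ^ (nbhdIn G S I).ncard)⁻¹)
      = ((2 : ℝ) ^ (nbhdIn G (⋃₀ 𝒮) I).ncard)⁻¹ := by
    intro 𝒮 hSK
    rw [hKF, Set.Finite.mem_toFinset] at hSK
    obtain ⟨h𝒮, hp⟩ := hSK
    have hSfin : 𝒮.Finite := Set.toFinite _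
    set SF := hSfin.toFinset with hSF
    have hcoe𝒮 : (↑SF : Set (Set V)) = 𝒮 := hSfin.coe_toFinset
    have hprod : (∏ᶠ S ∈ 𝒮, ((2 : ℝ) ^ (nbhdIn G S I).ncard)⁻¹)
        = ∏ S ∈ SF, ((2 : ℝ) ^ (nbhdIn G S I).ncard)⁻¹ := by
      rw [← hcoe𝒮, finprod_mem_coe_finset]
    -- the neighbourhoods are pairwise disjoint
    have hdisj : ∀ S ∈ SF, ∀ T ∈ SF, S ≠ T →
        Disjoint ((Set.toFinite (nbhdIn G S I)).toFinset)
          ((Set.toFinite (nbhdIn G T I)).toFinset) := by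
      intro S hS T hT hne
      rw [hSF, Set.Finite.mem_toFinset] at hS hT
      have hcd := compatible_closure_disjoint (h𝒮 S hS) (h𝒮 T hT) (hp hS hT hne)
      rw [Finset.disjoint_left]
      intro a haS haT
      rw [Set.Finite.mem_toFinset] at haS haT
      have : a ∈ (S ∪ nbhdIn G S I) ∩ (T ∪ nbhdIn G T I) := ⟨Or.inr haS, Or.inr haT⟩
      rw [hcd] at this
      exact this
    have hcard : (nbhdIn G (⋃₀ 𝒮) I).ncard = ∑ S ∈ SF, (nbhdIn G S I).ncard := by
      have hcoe : ↑(SF.biUnion fun S => (Set.toFinite (nbhdIn G S I)).toFinset)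
          = nbhdIn G (⋃₀ 𝒮) I := by
        rw [nbhdIn_sUnion (fun S hS => (h𝒮 S hS).2.1)]
        ext u
        simp only [Finset.coe_biUnion, Set.mem_iUnion, Finset.mem_coe,
          Finset.mem_biUnion, Set.Finite.mem_toFinset, Set.Finite.coe_toFinset, hSF]
      rw [← hcoe, Set.ncard_coe_finset, Finset.card_biUnion hdisj]
      refine Finset.sum_congr rfl fun S _ => ?_
      rw [Set.ncard_eq_toFinset_card _ (Set.toFinite _)]
    rw [hprod, hcard, ← Finset.prod_pow_eq_pow_sum, ← Finset.prod_inv_distrib]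
  -- Step 5 : put everything together
  have hsum : (∑ᶠ 𝒮 ∈ 𝓚, ∏ᶠ S ∈ 𝒮, ((2 : ℝ) ^ (nbhdIn G S I).ncard)⁻¹)
      = ∑ 𝒮 ∈ KF, ((2 : ℝ) ^ (nbhdIn G (⋃₀ 𝒮) I).ncard)⁻¹ := by
    rw [← hKfin.coe_toFinset, ← hKF, finsum_mem_coe_finset]
    exact Finset.sum_congr rfl step4
  rw [hsum, step1, step2]
  push_cast
  rw [Finset.mul_sum]
  refine Finset.sum_congr rfl fun 𝒮 h𝒮K => ?_
  rw [step3 𝒮 h𝒮K]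
  have hN : nbhdIn G (⋃₀ 𝒮) I ⊆ I := hNI 𝒮
  have hIfinN : I.Finite := Set.toFinite _
  have hcardeq : (I \ nbhdIn G (⋃₀ 𝒮) I).ncard + (nbhdIn G (⋃₀ 𝒮) I).ncard = I.ncard :=
    Set.ncard_diff_add_ncard_of_subset hN hIfinN
  have h2 : (2 : ℝ) ^ I.ncard
      = 2 ^ (I \ nbhdIn G (⋃₀ 𝒮) I).ncard * 2 ^ (nbhdIn G (⋃₀ 𝒮) I).ncard := by
    rw [← pow_add, hcardeq]
  push_cast
  rw [h2]
  field_simp
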